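/- Let T = F₁ + S_k(I−P_n) with F₁(I−P_n) = 0 and (I−P_{n+k})F₁ = 0, and define F_r = F₁^r + S_k(I−P_n)F₁^{r−1} + ⋯ + S_k^{r−1}(I−P_n)F₁ for r ≥ 2 (F₁ for r = 1). Then T^r = F_r + S_k^r(I−P_n) for all r ≥ 1. -/

import Mathlib

open ContinuousLinearMap

/-- With `T = F₁ + S_k (I - P_n)` (where `F₁ (I - P_n) = 0`, `(I - P_{n+k}) F₁ = 0`) and
`F_r = F₁^r + S_k (I-P_n) F₁^{r-1} + ⋯ + S_k^{r-1} (I-P_n) F₁` (`F_1 = F₁`),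
one has `T^r = F_r + S_k^r (I - P_n)` for all `r ≥ 1`. -/
theorem powers_of_T_formula
    {H : Type*} [NormedAddCommGroup H] [InnerProductSpace ℂ H] [CompleteSpace H]
    (e : HilbertBasis ℕ ℂ H) (n k : ℕ) (hk : 1 ≤ k)
    (Sk Pn Pnk F₁ T : H →L[ℂ] H) (F : ℕ → H →L[ℂ] H)
    (hSk : ∀ m : ℕ, Sk (e m) = e (m + k))
    (hPn : ∀ m : ℕ, Pn (e m) = if m < n then e m else 0)
    (hPnk : ∀ m : ℕ, Pnk (e m) = if m < n + k then e m else 0)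
    (hF1 : F₁ * (1 - Pn) = 0) (hF2 : (1 - Pnk) * F₁ = 0)
    (hT : T = F₁ + Sk * (1 - Pn))
    (hF : ∀ r : ℕ, F r = F₁ ^ r + ∑ j ∈ Finset.Ico 1 r, Sk ^ j * (1 - Pn) * F₁ ^ (r - j)) :
    ∀ r : ℕ, 1 ≤ r → T ^ r = F r + Sk ^ r * (1 - Pn) := by
  -- the key algebraic identity on the basis: `(1 - Pn) * Sk * (1 - Pn) = Sk * (1 - Pn)`
  have hdense : Dense (Submodule.span ℂ (Set.range (e : ℕ → H)) : Set H) := by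
    rw [Submodule.dense_iff_topologicalClosure_eq_top]
    exact e.dense_span
  have key : (1 - Pn) * (Sk * (1 - Pn)) = Sk * (1 - Pn) := by
    apply ContinuousLinearMap.ext_on hdense
    rintro _ ⟨m, rfl⟩
    simp only [mul_apply_eq_comp, sub_apply, one_apply_eq_self, hPn, hSk]
    by_cases hm : m < n
    · simp [hm]
    · have h2 : ¬ m + k < n := by omega
      simp [hm, h2, hPn, hSk]
  -- `F₁ * (Sk * (1 - Pn)) = 0`
  have hF1A : F₁ * (Sk * (1 - Pn)) = 0 := by
    have h1 : F₁ = F₁ * Pn := by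
      have := hF1
      rw [mul_sub, mul_one, sub_eq_zero] at this
      exact this
    have h2 : Pn * (Sk * (1 - Pn)) = 0 := by
      have := key
      rw [sub_mul, one_mul, sub_eq_self] at this
      exact this
    conv_lhs => rw [h1]
    rw [mul_assoc, h2, mul_zero]
  -- `F r * (Sk * (1 - Pn)) = 0` for `r ≥ 1`
  have hFA : ∀ r : ℕ, 1 ≤ r → F r * (Sk * (1 - Pn)) = 0 := by
    intro r hr
    rw [hF r, add_mul, Finset.sum_mul]
    obtain ⟨s, rfl⟩ := Nat.exists_eq_add_of_le hr
    have h1 : F₁ ^ (1 + s) * (Sk * (1 - Pn)) = 0 := by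
      rw [add_comm 1 s, pow_succ, mul_assoc, hF1A, mul_zero]
    rw [h1, zero_add]
    apply Finset.sum_eq_zero
    intro j hj
    simp only [Finset.mem_Ico] at hj
    obtain ⟨t, ht⟩ : ∃ t, 1 + s - j = t + 1 := ⟨1 + s - j - 1, by omega⟩
    rw [ht, pow_succ, mul_assoc, mul_assoc, mul_assoc, hF1A, mul_zero, mul_zero, mul_zero]
  -- main induction
  intro r hr
  induction r with
  | zero => omega
  | succ r ih =>
    by_cases hr1 : 1 ≤ r
    · have IH := ih hr1
      rw [pow_succ, IH, hT]
      have expand : (F r + Sk ^ r * (1 - Pn)) * (F₁ + Sk * (1 - Pn))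
          = F r * F₁ + F r * (Sk * (1 - Pn)) + Sk ^ r * ((1 - Pn) * F₁)
            + Sk ^ r * ((1 - Pn) * (Sk * (1 - Pn))) := by
        noncomm_ring
      rw [expand, hFA r hr1, key, add_zero, ← mul_assoc (Sk ^ r) (1 - Pn) F₁,
        ← mul_assoc, ← pow_succ]
      congr 1
      -- `F r * F₁ + Sk ^ r * (1 - Pn) * F₁ = F (r + 1)`
      rw [hF r, hF (r + 1), add_mul, Finset.sum_mul, ← pow_succ]
      rw [Finset.sum_Ico_succ_top hr1]
      have hterm : ∀ j ∈ Finset.Ico 1 r,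
          Sk ^ j * (1 - Pn) * F₁ ^ (r - j) * F₁ = Sk ^ j * (1 - Pn) * F₁ ^ (r + 1 - j) := by
        intro j hj
        simp only [Finset.mem_Ico] at hj
        rw [mul_assoc, ← pow_succ]
        congr 2
        omega
      rw [Finset.sum_congr rfl hterm]
      simp [add_assoc]
    · have hr0 : r = 0 := by omega
      subst hr0
      rw [pow_one, hT, hF 1]
      simp
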